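/- (Lemma 4 (iii)) For fixed x ∈ [0,1], as n → ∞, ∫₀¹ c_n(v,x) dv = 1 + (1/(n+1+x))·(x/2 − 1/6) + (1/(n+1+x)²)·(x²/6 + x/24 − 7/120) + o(1/n²); i.e. n² times the difference of the two sides tends to 0. -/

import Mathlib

open MeasureTheory ProbabilityTheory Filter Real Set
open scoped ENNReal NNReal

/-- Distribution of `Z_λ = N_λ + U`, `N_λ` Poisson(λ), `U` uniform on `(0,1)`, independent. -/
noncomputable def zMeasure (l : ℝ) : Measure ℝ :=
  Measure.map (fun p : ℝ × ℝ => p.1 + p.2)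
    ((Measure.map (Nat.cast : ℕ → ℝ) (poissonMeasure l.toNNReal)).prod
      (volume.restrict (Set.Ioo (0 : ℝ) 1)))

/-- The median of `Z_λ`: `inf {t : P(Z_λ ≤ t) ≥ 1/2}`. -/
noncomputable def medianZ (l : ℝ) : ℝ :=
  sInf {t : ℝ | (1 : ℝ≥0∞) / 2 ≤ zMeasure l (Set.Iic t)}

/-- The function `H` of the main theorem. -/
noncomputable def Hfun (x : ℝ) : ℝ :=
  if x ≤ 2 / 3 then x ^ 2 * (x - 1) / 3 + 4 / 135
  else x / 3 * (x ^ 2 - 4 * x + 5) - 86 / 135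

/-- `w_n(x,k) = P(Z_{n+x} ≤ n + x + 1/3 + k/(n+x))`. -/
noncomputable def w (n : ℕ) (x k : ℝ) : ℝ :=
  (zMeasure (n + x) (Set.Iic ((n : ℝ) + x + 1 / 3 + k / (n + x)))).toReal

/-- `r_n(x,k) = k/(n+x)`. -/
noncomputable def r (n : ℕ) (x k : ℝ) : ℝ := k / (n + x)

/-- `g_n(u) = e^{-u} u^n`. -/
noncomputable def g (n : ℕ) (u : ℝ) : ℝ := Real.exp (-u) * u ^ n

/-- `c_n(v,x) = ((n+v+x)/(n+1+x))^{n+1} e^{1-v}`. -/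
noncomputable def c (n : ℕ) (v x : ℝ) : ℝ :=
  (((n : ℝ) + v + x) / ((n : ℝ) + 1 + x)) ^ (n + 1) * Real.exp (1 - v)

/-- `Δ_n(x,k) = ((n+1)!/g_{n+1}(n+1+x)) (w_{n+1}(x,k) - w_n(x,k))`. -/
noncomputable def Δfun (n : ℕ) (x k : ℝ) : ℝ :=
  ((n + 1).factorial : ℝ) / g (n + 1) ((n : ℝ) + 1 + x) * (w (n + 1) x k - w n x k)

lemma exp_quad {y : ℝ} (h : |y| ≤ 1) : |Real.exp y - (1 + y + y^2/2)| ≤ |y|^3 := by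
  have h3 := Real.exp_bound h (n := 3) (by norm_num)
  have hs : (∑ i ∈ Finset.range 3, y ^ i / (Nat.factorial i : ℝ)) = 1 + y + y^2/2 := by
    simp [Finset.sum_range_succ, Nat.factorial]
  rw [hs] at h3
  have : |y|^3 * ((3:ℕ).succ / ((Nat.factorial 3 : ℝ) * 3)) ≤ |y|^3 := by
    have h0 : (0:ℝ) ≤ |y|^3 := by positivity
    have : ((3:ℕ).succ / ((Nat.factorial 3 : ℝ) * 3)) = 2/9 := by norm_num [Nat.factorial]
    rw [this]; nlinarith
  linarith [h3]

lemma log_cubic {u : ℝ} (hu : |u| ≤ 1/3) :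
    |Real.log (1+u) - (u - u^2/2 + u^3/3)| ≤ (3/2) * u^4 := by
  have h := Real.abs_log_sub_add_sum_range_le (x := -u) (by rw [abs_neg]; linarith [abs_nonneg u]) 3
  have hs : (∑ i ∈ Finset.range 3, (-u) ^ (i + 1) / ((i:ℝ) + 1)) = -u + u^2/2 - u^3/3 := by
    simp [Finset.sum_range_succ]
    ring
  rw [hs] at h
  have h1 : (-u + u^2/2 - u^3/3) + Real.log (1 - -u) = Real.log (1+u) - (u - u^2/2 + u^3/3) := by
    ring_nf
  rw [h1] at h
  have h2 : |(-u)|^(3+1) / (1 - |(-u)|) ≤ (3/2) * u^4 := by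
    rw [abs_neg]
    have hu4 : |u|^4 = u^4 := by
      rw [← abs_pow]; exact abs_of_nonneg (by positivity)
    have hpos : (2:ℝ)/3 ≤ 1 - |u| := by linarith
    calc |u|^(3+1) / (1 - |u|) ≤ |u|^4 / (2/3) := by
          apply div_le_div_of_nonneg_left (by positivity) (by norm_num) hpos
      _ = (3/2) * u^4 := by rw [hu4]; ring
  linarith

set_option maxHeartbeats 1000000 in
lemma arith_bound (x t s m A B R ψ : ℝ) (hx0 : 0 ≤ x) (hx1 : x ≤ 1)
    (ht1 : -1 ≤ t) (ht0 : t ≤ 0) (hm3 : 3 ≤ m) (hm0 : 0 < m)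
    (hs0 : 0 < s) (hs3 : s ≤ 1/3) (hms : m * s = 1)
    (hR : |R| ≤ 3/2 * (t*s)^4)
    (hAdef : A = -(t^2/2 + x*t)) (hBdef : B = t^3/3 + x*t^2/2)
    (hid : ψ - (s*A + s^2*B) = (m - x)*R - x*t^3*s^3/3) :
    |Real.exp ψ - (1 + s*A + s^2*(B + A^2/2))| ≤ 20 * s^3 := by
  have tri : ∀ a b : ℝ, |a - b| ≤ |a| + |b| := fun a b => by
    simpa [sub_eq_add_neg, abs_neg] using abs_add_le a (-b)
  have hs3p : (0:ℝ) < s^3 := pow_pos hs0 3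
  have ht2 : t^2 ≤ 1 := by nlinarith
  have ht4 : t^4 ≤ 1 := by nlinarith [sq_nonneg t, ht2]
  have ht3 : -1 ≤ t^3 ∧ t^3 ≤ 0 := ⟨by nlinarith, by nlinarith⟩
  have hmxR : |(m - x)*R| ≤ (3/2) * s^3 := by
    have hmx0 : (0:ℝ) ≤ m - x := by linarith
    calc |(m - x)*R| = (m - x) * |R| := by rw [abs_mul, abs_of_nonneg hmx0]
      _ ≤ m * ((3/2) * (t*s)^4) := by
          apply mul_le_mul (by linarith) hR (abs_nonneg _) hm0.le
      _ = (3/2) * t^4 * s^3 * (m * s) := by ring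
      _ = (3/2) * t^4 * s^3 := by rw [hms]; ring
      _ ≤ (3/2) * s^3 := by nlinarith
  have hxt : -1 ≤ x * t^3 := by nlinarith [mul_le_mul_of_nonneg_left ht3.1 hx0]
  have hxt0 : x * t^3 ≤ 0 := mul_nonpos_of_nonneg_of_nonpos hx0 ht3.2
  have hxt3 : |x*t^3*s^3/3| ≤ (1/3) * s^3 := by
    rw [abs_le]
    constructor
    · nlinarith [mul_le_mul_of_nonneg_right hxt hs3p.le]
    · nlinarith [mul_le_mul_of_nonneg_right hxt0 hs3p.le]
  have hE : |ψ - (s*A + s^2*B)| ≤ 2 * s^3 := by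
    rw [hid]
    calc |(m - x)*R - x*t^3*s^3/3| ≤ |(m - x)*R| + |x*t^3*s^3/3| := tri _ _
      _ ≤ 2 * s^3 := by linarith
  clear hid hR hms hmxR hxt hxt0 hxt3
  have hAb : -(3/2) ≤ A ∧ A ≤ 3/2 := by
    constructor <;> rw [hAdef] <;> nlinarith
  have hBb : -(5/6) ≤ B ∧ B ≤ 5/6 := by
    constructor <;> rw [hBdef] <;> nlinarith
  have hE' := abs_le.mp hE
  have hs2 : s^2 ≤ s/3 := by nlinarith
  have hs3' : s^3 ≤ s/9 := by nlinarith [pow_pos hs0 2]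
  have hψb : |ψ| ≤ 2 * s := by
    rw [abs_le]
    constructor <;> nlinarith [mul_le_mul_of_nonneg_left hAb.2 hs0.le,
      mul_le_mul_of_nonneg_left hAb.1 hs0.le,
      mul_le_mul_of_nonneg_left hBb.2 (sq_nonneg s),
      mul_le_mul_of_nonneg_left hBb.1 (sq_nonneg s)]
  have hψ1 : |ψ| ≤ 1 := by linarith
  have hexp : |Real.exp ψ - (1 + ψ + ψ^2/2)| ≤ 8 * s^3 := by
    have h1 := exp_quad hψ1
    have h2 : |ψ|^3 ≤ (2*s)^3 := pow_le_pow_left₀ (abs_nonneg _) hψb 3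
    calc |Real.exp ψ - (1 + ψ + ψ^2/2)| ≤ |ψ|^3 := h1
      _ ≤ (2*s)^3 := h2
      _ = 8 * s^3 := by ring
  set D : ℝ := ψ - (s*A + s^2*B) with hDdef
  set E : ℝ := Real.exp ψ - (1 + ψ + ψ^2/2) with hEdef
  have hP1 : |D + s^2*B| ≤ (3/2) * s^2 := by
    have hsB : |s^2*B| ≤ s^2 * (5/6) := by
      rw [abs_mul, abs_of_nonneg (sq_nonneg s)]
      exact mul_le_mul_of_nonneg_left (abs_le.mpr hBb) (sq_nonneg s)
    calc |D + s^2*B| ≤ |D| + |s^2*B| := abs_add_le _ _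
      _ ≤ 2*s^3 + s^2 * (5/6) := by linarith
      _ ≤ (3/2) * s^2 := by nlinarith
  have hP2 : |ψ + s*A| ≤ (7/2) * s := by
    have hsA : |s*A| ≤ s * (3/2) := by
      rw [abs_mul, abs_of_nonneg hs0.le]
      exact mul_le_mul_of_nonneg_left (abs_le.mpr hAb) hs0.le
    calc |ψ + s*A| ≤ |ψ| + |s*A| := abs_add_le _ _
      _ ≤ 2*s + s * (3/2) := by linarith
      _ = (7/2) * s := by ring
  have hprod : |(D + s^2*B) * (ψ + s*A)| ≤ (21/4) * s^3 := by
    rw [abs_mul]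
    calc |D + s^2*B| * |ψ + s*A| ≤ ((3/2)*s^2) * ((7/2)*s) := by
          apply mul_le_mul hP1 hP2 (abs_nonneg _) (by positivity)
      _ = (21/4) * s^3 := by ring
  have hid2 : Real.exp ψ - (1 + s*A + s^2*(B + A^2/2))
      = E + D + (D + s^2*B) * (ψ + s*A)/2 := by
    rw [hEdef, hDdef]; ring
  rw [hid2]
  calc |E + D + (D + s^2*B) * (ψ + s*A)/2|
      ≤ |E + D| + |(D + s^2*B) * (ψ + s*A)/2| := abs_add_le _ _
    _ ≤ (|E| + |D|) + |(D + s^2*B) * (ψ + s*A)|/2 := by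
        rw [abs_div]
        simp only [abs_two]
        gcongr
        exact abs_add_le _ _
    _ ≤ 20 * s^3 := by
        have h1 : |E| ≤ 8 * s^3 := hexp
        have h2 : |D| ≤ 2 * s^3 := hE
        linarith

set_option maxHeartbeats 1000000 in
lemma key_pointwise (x v : ℝ) (hx0 : 0 ≤ x) (hx1 : x ≤ 1) (hv0 : 0 ≤ v) (hv1 : v ≤ 1)
    (n : ℕ) (hm3 : 3 ≤ (n:ℝ) + 1 + x) :
    |c n v x - (1 + (1/((n:ℝ)+1+x)) * (-((v-1)^2/2 + x*(v-1)))
      + (1/((n:ℝ)+1+x))^2 * (((v-1)^3/3 + x*(v-1)^2/2) + (-((v-1)^2/2 + x*(v-1)))^2/2))|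
      ≤ 20 / ((n:ℝ)+1+x)^3 := by
  set m : ℝ := (n:ℝ) + 1 + x with hmdef
  have hm0 : (0:ℝ) < m := by linarith
  set s : ℝ := 1/m with hsdef
  have hs0 : (0:ℝ) < s := by positivity
  have hs3 : s ≤ 1/3 := by
    rw [hsdef, div_le_div_iff₀ hm0 (by norm_num)]
    linarith
  have hms : m * s = 1 := by
    rw [hsdef]; field_simp
  set t : ℝ := v - 1 with htdef
  have ht1 : -1 ≤ t := by rw [htdef]; linarith
  have ht0 : t ≤ 0 := by rw [htdef]; linarith
  set u : ℝ := t * s with hudef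
  have hu : |u| ≤ 1/3 := by
    rw [hudef, abs_mul, abs_of_nonneg hs0.le]
    have h1 : |t| ≤ 1 := abs_le.mpr ⟨ht1, ht0.trans zero_le_one⟩
    calc |t| * s ≤ 1 * (1/3) := mul_le_mul h1 hs3 hs0.le zero_le_one
      _ = 1/3 := by norm_num
  set A : ℝ := -(t^2/2 + x*t) with hAdef
  set B : ℝ := t^3/3 + x*t^2/2 with hBdef
  set L : ℝ := Real.log (1 + u) with hLdef
  set ψ : ℝ := (m - x) * L - t with hψdef
  have hbasepos : (0:ℝ) < ((n : ℝ) + v + x) / ((n : ℝ) + 1 + x) := by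
    apply div_pos
    · have h2 : (2:ℝ) ≤ (n:ℝ) + 1 := by
        have : (3:ℝ) ≤ (n:ℝ) + 1 + x := hm3
        linarith
      linarith
    · linarith
  have hbase : ((n : ℝ) + v + x) / ((n : ℝ) + 1 + x) = 1 + u := by
    rw [hudef, hsdef, htdef, hmdef]
    field_simp
    ring
  have hcψ : c n v x = Real.exp ψ := by
    rw [c, ← Real.exp_log hbasepos, ← Real.exp_nat_mul, ← Real.exp_add]
    congr 1
    rw [hbase, hψdef, ← hLdef]
    push_cast
    rw [hmdef, htdef]
    ring
  set R : ℝ := L - (u - u^2/2 + u^3/3) with hRdef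
  have hR : |R| ≤ (3/2) * u^4 := log_cubic hu
  have hid : ψ - (s*A + s^2*B) = (m - x)*R - x*t^3*s^3/3 := by
    have hL : L = (u - u^2/2 + u^3/3) + R := by rw [hRdef]; ring
    rw [hψdef, hL, hudef, hAdef, hBdef]
    linear_combination (t - t^2*s/2 + t^3*s^2/3) * hms
  clear_value R L ψ u A B t s m
  rw [hcψ]
  have h20 : (20:ℝ) / m^3 = 20 * s^3 := by
    rw [hsdef]; field_simp
  rw [h20]
  apply arith_bound x t s m A B R ψ hx0 hx1 ht1 ht0 hm3 hm0 hs0 hs3 hms _ hAdef hBdef hid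
  rw [← hudef]
  exact hR

lemma integral_q (x s : ℝ) :
    ∫ v in (0:ℝ)..1, (1 + s * (-((v-1)^2/2 + x*(v-1)))
      + s^2 * (((v-1)^3/3 + x*(v-1)^2/2) + (-((v-1)^2/2 + x*(v-1)))^2/2))
    = 1 + s * (x/2 - 1/6) + s^2 * (x^2/6 + x/24 - 7/120) := by
  have h : ∀ v ∈ Set.uIcc (0:ℝ) 1,
      HasDerivAt (fun v : ℝ => v + s * (-((v-1)^3/6 + x*(v-1)^2/2))
        + s^2 * ((v-1)^4/12 + x*(v-1)^3/6 + ((v-1)^5/40 + x*(v-1)^4/8 + x^2*(v-1)^3/6)))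
      (1 + s * (-((v-1)^2/2 + x*(v-1)))
        + s^2 * (((v-1)^3/3 + x*(v-1)^2/2) + (-((v-1)^2/2 + x*(v-1)))^2/2)) v := by
    intro v _
    have h1 : HasDerivAt (fun v : ℝ => v - 1) 1 v := (hasDerivAt_id v).sub_const 1
    have h2 := h1.pow 2
    have h3 := h1.pow 3
    have h4 := h1.pow 4
    have h5 := h1.pow 5
    have H := ((hasDerivAt_id v).add
        ((((h3.div_const 6).add ((h2.div_const 2).const_mul x)).neg).const_mul s)).add
      ((((h4.div_const 12).add ((h3.div_const 6).const_mul x)).add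
        (((h5.div_const 40).add ((h4.div_const 8).const_mul x)).add
          ((h3.div_const 6).const_mul (x^2)))).const_mul (s^2))
    convert H using 1
    · rfl
    · rfl
    · funext w
      simp only [Pi.add_apply, Pi.neg_apply, Pi.pow_apply, id_eq]
      ring
    · push_cast
      norm_num
      ring
  rw [intervalIntegral.integral_eq_sub_of_hasDerivAt h (Continuous.intervalIntegrable (by fun_prop) 0 1)]
  norm_num
  ring

theorem lemma4_iii (x : ℝ) (hx : x ∈ Set.Icc (0 : ℝ) 1) :
    Tendsto (fun n : ℕ => (n : ℝ) ^ 2 *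
      ((∫ v in (0 : ℝ)..1, c n v x) -
        (1 + 1 / ((n : ℝ) + 1 + x) * (x / 2 - 1 / 6)
          + 1 / ((n : ℝ) + 1 + x) ^ 2 * (x ^ 2 / 6 + x / 24 - 7 / 120))))
      atTop (nhds 0) := by
  obtain ⟨hx0, hx1⟩ := hx
  have htend : Tendsto (fun n : ℕ => 20 * (1/(n:ℝ))) atTop (nhds 0) := by
    simpa using tendsto_one_div_atTop_nhds_zero_nat.const_mul (20:ℝ)
  apply squeeze_zero_norm' ?_ htend
  filter_upwards [Filter.eventually_ge_atTop 2] with n hn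
  have hn2 : (2:ℝ) ≤ (n:ℝ) := by exact_mod_cast hn
  have hm3 : 3 ≤ (n:ℝ)+1+x := by linarith
  have hm0 : (0:ℝ) < (n:ℝ)+1+x := by linarith
  have hq := integral_q x (1/((n:ℝ)+1+x))
  have hcont_c : Continuous (fun v : ℝ => c n v x) := by
    unfold c
    exact ((((continuous_const.add continuous_id).add continuous_const).div_const _).pow _).mul
      (Real.continuous_exp.comp (continuous_const.sub continuous_id))
  have hcont_q : Continuous (fun v : ℝ => 1 + (1/((n:ℝ)+1+x)) * (-((v-1)^2/2 + x*(v-1)))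
      + (1/((n:ℝ)+1+x))^2 * (((v-1)^3/3 + x*(v-1)^2/2) + (-((v-1)^2/2 + x*(v-1)))^2/2)) := by
    fun_prop
  have hIc : IntervalIntegrable (fun v : ℝ => c n v x) volume 0 1 :=
    hcont_c.intervalIntegrable 0 1
  have hIq : IntervalIntegrable (fun v : ℝ => 1 + (1/((n:ℝ)+1+x)) * (-((v-1)^2/2 + x*(v-1)))
      + (1/((n:ℝ)+1+x))^2 * (((v-1)^3/3 + x*(v-1)^2/2) + (-((v-1)^2/2 + x*(v-1)))^2/2))
      volume 0 1 := hcont_q.intervalIntegrable 0 1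
  have hdiff : |(∫ v in (0:ℝ)..1, c n v x)
      - ∫ v in (0:ℝ)..1, (1 + (1/((n:ℝ)+1+x)) * (-((v-1)^2/2 + x*(v-1)))
        + (1/((n:ℝ)+1+x))^2 * (((v-1)^3/3 + x*(v-1)^2/2) + (-((v-1)^2/2 + x*(v-1)))^2/2))|
      ≤ 20/((n:ℝ)+1+x)^3 := by
    rw [← intervalIntegral.integral_sub hIc hIq]
    have hb := intervalIntegral.norm_integral_le_of_norm_le_const
      (C := 20/((n:ℝ)+1+x)^3) (a := (0:ℝ)) (b := 1)
      (f := fun v => c n v x - (1 + (1/((n:ℝ)+1+x)) * (-((v-1)^2/2 + x*(v-1)))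
        + (1/((n:ℝ)+1+x))^2 * (((v-1)^3/3 + x*(v-1)^2/2) + (-((v-1)^2/2 + x*(v-1)))^2/2)))
      ?_
    · simpa [Real.norm_eq_abs] using hb
    · intro v hv
      rw [Set.uIoc_of_le (by norm_num : (0:ℝ) ≤ 1)] at hv
      simpa [Real.norm_eq_abs] using key_pointwise x v hx0 hx1 hv.1.le hv.2 n hm3
  rw [hq] at hdiff
  rw [Real.norm_eq_abs, abs_mul, abs_pow]
  have habs : |((n:ℝ))| = (n:ℝ) := abs_of_nonneg (by positivity)
  rw [habs]
  have hPP : (1 + (1/((n:ℝ)+1+x)) * (x/2 - 1/6) + (1/((n:ℝ)+1+x))^2 * (x^2/6 + x/24 - 7/120))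
      = (1 + 1 / ((n : ℝ) + 1 + x) * (x / 2 - 1 / 6)
          + 1 / ((n : ℝ) + 1 + x) ^ 2 * (x ^ 2 / 6 + x / 24 - 7 / 120)) := by
    rw [one_div_pow]
  rw [hPP] at hdiff
  calc (n:ℝ)^2 * |(∫ v in (0:ℝ)..1, c n v x) - (1 + 1 / ((n : ℝ) + 1 + x) * (x / 2 - 1 / 6)
          + 1 / ((n : ℝ) + 1 + x) ^ 2 * (x ^ 2 / 6 + x / 24 - 7 / 120))|
      ≤ (n:ℝ)^2 * (20/((n:ℝ)+1+x)^3) := by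
        apply mul_le_mul_of_nonneg_left hdiff (by positivity)
    _ ≤ 20 * (1/(n:ℝ)) := by
        have hnm : ((n:ℝ))^3 ≤ ((n:ℝ)+1+x)^3 :=
          pow_le_pow_left₀ (by positivity) (by linarith) 3
        rw [show (n:ℝ)^2 * (20/((n:ℝ)+1+x)^3) = (20*(n:ℝ)^2)/((n:ℝ)+1+x)^3 by ring,
          show (20:ℝ) * (1/(n:ℝ)) = 20/(n:ℝ) by ring,
          div_le_div_iff₀ (by positivity) (by positivity)]
        nlinarith [sq_nonneg ((n:ℝ))]
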